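/- For all integers m, n, k, j ≥ 0, the (area, bounce) q,t-enumerator of doubly decorated reduced polyominoes satisfies RP_{q,t}(m∖(m+1), n)^{∘k,j} = δ_{k,0} · q^{binom(j,2)} · qbinom(m+1, j)_q · qbinom(m+n−j, m)_q, where δ_{k,0} = 1 if k = 0 and 0 otherwise, and binom(j,2) = j(j−1)/2. -/

import Mathlib

open Finset

attribute [local instance] Classical.propDecidable

noncomputable section

/-- The ring of polynomials in the two variables `q` and `t` with integer coefficients. -/
abbrev R2 : Type := MvPolynomial (Fin 2) ℤ

/-- The variable `q`. -/
def qv : R2 := MvPolynomial.X 0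

/-- The variable `t`. -/
def tv : R2 := MvPolynomial.X 1

/-- The Gaussian binomial coefficient `[N choose k]_q`, defined via the q-Pascal
recursion `[N+1, k+1]_q = [N, k]_q + q^(k+1) [N, k+1]_q`; it agrees with
`[N]_q! / ([k]_q! [N-k]_q!)` for `0 ≤ k ≤ N` and vanishes for `k > N`. -/
def qBinom : ℕ → ℕ → R2
  | _, 0 => 1
  | 0, _ + 1 => 0
  | N + 1, k + 1 => qBinom N k + qv ^ (k + 1) * qBinom N (k + 1)

/-- The Gaussian binomial coefficient with integer arguments:
it is `0` unless `0 ≤ k ≤ N`. -/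
def qBinomZ (N k : ℤ) : R2 :=
  if 0 ≤ k ∧ k ≤ N then qBinom N.toNat k.toNat else 0

/-! ## Dyck paths as step words

A lattice path is encoded as a word `w : Fin L → Bool`, where `true` is a north
step and `false` is an east step. -/

/-- The number of north steps among the first `k` steps. -/
def nBef {L : ℕ} (w : Fin L → Bool) (k : ℕ) : ℕ :=
  (univ.filter fun i : Fin L => i.1 < k ∧ w i = true).card

/-- The number of east steps among the first `k` steps. -/
def eBef {L : ℕ} (w : Fin L → Bool) (k : ℕ) : ℕ :=
  (univ.filter fun i : Fin L => i.1 < k ∧ w i = false).card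

/-- `w` is the step word of a Dyck path of size `N`: it has `N` north steps
(hence `N` east steps) and every prefix has at least as many norths as easts,
i.e. the path stays weakly above the main diagonal. -/
def IsDyckStep (N : ℕ) (w : Fin (2 * N) → Bool) : Prop :=
  nBef w (2 * N) = N ∧ ∀ k : ℕ, k ≤ 2 * N → eBef w k ≤ nBef w k

/-- A valley: a north step directly preceded by an east step. -/
def IsValleyS {L : ℕ} (w : Fin L → Bool) (i : Fin L) : Prop :=
  w i = true ∧ ∃ j : Fin L, i.1 = j.1 + 1 ∧ w j = false

/-- A peak: a north step followed by an east step, or the last (north) step. -/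
def IsPeakS {L : ℕ} (w : Fin L → Bool) (i : Fin L) : Prop :=
  w i = true ∧ ∀ j : Fin L, j.1 = i.1 + 1 → w j = false

/-- A fall: an east step immediately followed by another east step. -/
def IsFallS {L : ℕ} (w : Fin L → Bool) (i : Fin L) : Prop :=
  w i = false ∧ ∃ j : Fin L, j.1 = i.1 + 1 ∧ w j = false

/-- A fall, where additionally the last step of the path is allowed. -/
def IsFallX {L : ℕ} (w : Fin L → Bool) (i : Fin L) : Prop :=
  w i = false ∧ (i.1 + 1 = L ∨ ∃ j : Fin L, j.1 = i.1 + 1 ∧ w j = false)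

/-! ## Reduced parallelogram polyominoes: pair-of-paths model

A reduced polyomino of size `m × n` is a pair of lattice paths (red and green,
`true` = north, `false` = east) from `(0,0)` to `(m,n)`, the red one lying
always weakly above the green one. -/

/-- The number of north steps of `w` before its `c`-th east step (for `c` larger
than the number of east steps, this is the total number of north steps). -/
def Yval {L : ℕ} (w : Fin L → Bool) (c : ℕ) : ℕ :=
  (univ.filter fun i : Fin L => w i = true ∧ eBef w i.1 < c).card

/-- The number of east steps of `w` before its `k`-th north step (for `k` larger
than the number of north steps, this is the total number of east steps). -/
def Xval {L : ℕ} (w : Fin L → Bool) (k : ℕ) : ℕ :=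
  (univ.filter fun i : Fin L => w i = false ∧ nBef w i.1 < k).card

/-- `(red, green)` is a pair of paths from `(0,0)` to `(m,n)` with red weakly
above green. -/
def IsRPPair (m n : ℕ) (red green : Fin (m + n) → Bool) : Prop :=
  nBef red (m + n) = n ∧ nBef green (m + n) = n ∧
    ∀ k : ℕ, k ≤ m + n → nBef green k ≤ nBef red k

/-- A green peak: a horizontal green step immediately following a vertical
green step. -/
def IsGreenPeak {L : ℕ} (g : Fin L → Bool) (i : Fin L) : Prop :=
  g i = false ∧ ∃ j : Fin L, i.1 = j.1 + 1 ∧ g j = true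

/-- A red valley: a vertical red step immediately following a horizontal red
step; the first red step counts as a valley if it is vertical. -/
def IsRedValley {L : ℕ} (w : Fin L → Bool) (i : Fin L) : Prop :=
  w i = true ∧ (i.1 = 0 ∨ ∃ j : Fin L, i.1 = j.1 + 1 ∧ w j = false)

/-- Candidate objects: (red path, green path, decorated green peaks,
decorated red valleys). -/
abbrev RPoCand (m n : ℕ) :=
  (Fin (m + n) → Bool) × (Fin (m + n) → Bool) × Finset (Fin (m + n)) × Finset (Fin (m + n))

/-- The `k`-th corner `(p_k, h_k)` of the bounce path of a reduced polyomino: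
starting at `(0,0)` it goes east until the beginning of a vertical green step,
north until the beginning of a horizontal red step, and so on, bouncing at the
beginning of a step of either path. -/
def bncP {L : ℕ} (red green : Fin L → Bool) : ℕ → ℕ × ℕ
  | 0 => (0, 0)
  | k + 1 =>
    let p' := Xval green ((bncP red green k).2 + 1)
    (p', Yval red (p' + 1))

/-- The letter (disregarding the bar) of the bounce word carried by the
vertical bounce step in row `y`. -/
def vLabel {L : ℕ} (red green : Fin L → Bool) (y : ℕ) : ℕ :=
  ((Finset.Icc 1 L).filter fun k => (bncP red green k).2 ≤ y).card

/-- The letter of the bounce word carried by the horizontal bounce step in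
column `c`. -/
def hLabel {L : ℕ} (red green : Fin L → Bool) (c : ℕ) : ℕ :=
  ((Finset.Icc 1 L).filter fun k => (bncP red green k).1 ≤ c).card

/-- The area: the sum of the letters of the area word of the polyomino
disregarding bars, i.e. the number of whole squares lying between the two
paths. -/
def areaRPo {m n : ℕ} (x : RPoCand m n) : ℕ :=
  ∑ c ∈ Finset.Icc 1 m, (Yval x.1 c - Yval x.2.1 c)

/-- The bounce: the sum of the letters of the bounce word disregarding bars,
not counting the barred letters (vertical bounce steps) lying in the same row
as a decorated red valley, nor the unbarred letters (horizontal bounce steps)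
lying in the same column as a decorated green peak. -/
def bounceRPo {m n : ℕ} (x : RPoCand m n) : ℕ :=
  (∑ y ∈ (Finset.range n).filter
      (fun y => y ∉ x.2.2.2.image fun i => nBef x.1 i.1), vLabel x.1 x.2.1 y) +
    ∑ c ∈ (Finset.range m).filter
      (fun c => c ∉ x.2.2.1.image fun i => eBef x.2.1 i.1), hLabel x.1 x.2.1 c

/-- Membership in `RP(m∖r, n)^{∘k, j}`: a reduced polyomino of size `m × n`
with `k` decorated green peaks, `j` decorated red valleys, and exactly `r-1`
letters equal to `0` in the bounce word (the `0` letters of the bounce word are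
the horizontal steps of its initial east run). -/
def IsRPo (m n r k j : ℕ) (x : RPoCand m n) : Prop :=
  IsRPPair m n x.1 x.2.1 ∧
    (∀ i ∈ x.2.2.1, IsGreenPeak x.2.1 i) ∧ x.2.2.1.card = k ∧
    (∀ i ∈ x.2.2.2, IsRedValley x.1 i) ∧ x.2.2.2.card = j ∧
    Xval x.2.1 1 + 1 = r

/-- The `(area, bounce)` q,t-enumerator `RP_{q,t}(m∖r, n)^{∘k, j}`;
it is `0` if some parameter is negative. -/
def RPoE (m n r k j : ℤ) : R2 :=
  if 0 ≤ m ∧ 0 ≤ n ∧ 0 ≤ r ∧ 0 ≤ k ∧ 0 ≤ j then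
    ∑ x ∈ univ.filter (IsRPo m.toNat n.toNat r.toNat k.toNat j.toNat),
      qv ^ areaRPo x * tv ^ bounceRPo x
  else 0
/-! ### q-binomial lemmas -/

lemma qBinom_zero_right (N : ℕ) : qBinom N 0 = 1 := by cases N <;> rfl

lemma qBinom_succ_succ (N k : ℕ) :
    qBinom (N+1) (k+1) = qBinom N k + qv ^ (k+1) * qBinom N (k+1) := rfl

lemma qBinom_eq_zero_of_lt : ∀ {N k : ℕ}, N < k → qBinom N k = 0 := by
  intro N
  induction N with
  | zero =>
    rintro (_ | k) hk
    · omega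
    · rfl
  | succ N ih =>
    rintro (_ | k) hk
    · omega
    · rw [qBinom_succ_succ, ih (by omega), ih (by omega)]
      ring

lemma qBinom_self : ∀ N, qBinom N N = 1
  | 0 => rfl
  | N + 1 => by
    rw [qBinom_succ_succ, qBinom_self N, qBinom_eq_zero_of_lt (Nat.lt_succ_self N)]
    ring

lemma qBinom_one_succ : ∀ N, qBinom (N+1) 1 = qv ^ N + qBinom N 1
  | 0 => by
    rw [qBinom_succ_succ 0 0, qBinom_zero_right]
    show 1 + qv ^ 1 * 0 = qv ^ 0 + 0
    ring
  | N + 1 => by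
    have d1 := qBinom_succ_succ (N+1) 0
    have d2 := qBinom_succ_succ N 0
    have h := qBinom_one_succ N
    rw [qBinom_zero_right] at d1 d2
    linear_combination d1 + qv * h - d2

/-- The "dual Pascal" relation in pre-multiplied form. -/
lemma qBinom_G : ∀ m j : ℕ,
    qv ^ j * qBinom (m+1) (j+1) = qv ^ j * qBinom m (j+1) + qv ^ m * qBinom m j := by
  intro m
  induction m with
  | zero =>
    rintro (_ | j)
    · simp [qBinom_succ_succ, qBinom_zero_right, qBinom_eq_zero_of_lt]
    · rw [qBinom_eq_zero_of_lt (by omega), qBinom_eq_zero_of_lt (by omega),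
        qBinom_eq_zero_of_lt (by omega)]
      ring
  | succ m ih =>
    rintro (_ | j)
    · simp only [pow_zero, one_mul]
      rw [qBinom_one_succ (m+1), qBinom_one_succ m, qBinom_zero_right]
      ring
    · have dA := qBinom_succ_succ (m+1) (j+1)
      have dB1 := qBinom_succ_succ m j
      have dB2 := qBinom_succ_succ m (j+1)
      have h1 := ih (j+1)
      have h2 := ih j
      linear_combination qv^(j+1) * dA + qv^(j+2) * h1 + qv * h2
        - qv^(m+1) * dB1 - qv^(j+1) * dB2

lemma Nat.choose_succ_two (j : ℕ) : (j+1).choose 2 = j.choose 2 + j := by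
  rw [Nat.choose_succ_succ]
  simp [Nat.choose_one_right]
  omega

/-- Pre-multiplied dual Pascal with the `q^(binom j 2)` weights. -/
lemma qBinom_E (m j : ℕ) :
    qv ^ ((j+1).choose 2) * qBinom (m+1) (j+1)
      = qv ^ ((j+1).choose 2) * qBinom m (j+1) + qv ^ (m + j.choose 2) * qBinom m j := by
  have := qBinom_G m j
  rw [Nat.choose_succ_two]
  calc qv ^ (j.choose 2 + j) * qBinom (m+1) (j+1)
      = qv ^ (j.choose 2) * (qv ^ j * qBinom (m+1) (j+1)) := by ring
    _ = qv ^ (j.choose 2) * (qv ^ j * qBinom m (j+1) + qv ^ m * qBinom m j) := by rw [this]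
    _ = _ := by ring

/-! ### `qBinomZ` lemmas -/

lemma qBinomZ_of_le {N k : ℕ} : qBinomZ (N : ℤ) (k : ℤ) = qBinom N k := by
  unfold qBinomZ
  by_cases h : (k : ℤ) ≤ (N : ℤ)
  · rw [if_pos ⟨Int.ofNat_nonneg k, h⟩]
    simp
  · rw [if_neg (by tauto), qBinom_eq_zero_of_lt (by omega)]

/-- The guarded form appearing in the closed formulas. -/
def Zb (M N j : ℕ) : R2 := qBinomZ ((M : ℤ) + N - j) M

lemma Zb_of_le {M N j : ℕ} (h : j ≤ N) : Zb M N j = qBinom (M + N - j) M := by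
  unfold Zb
  have e : (M : ℤ) + N - j = ((M + N - j : ℕ) : ℤ) := by omega
  rw [e, qBinomZ_of_le]

lemma Zb_of_gt {M N j : ℕ} (h : N < j) : Zb M N j = 0 := by
  unfold Zb qBinomZ
  rw [if_neg]
  omega

/-- Pascal recursion for `Zb` in the needed shape. -/
lemma Zb_pascal (M N j : ℕ) :
    Zb (M+1) (N+1) j = Zb M (N+1) j + qv ^ (M+1) * Zb (M+1) N j := by
  rcases lt_trichotomy j (N+1) with h | h | h
  · have h' : j ≤ N := by omega
    rw [Zb_of_le (by omega), Zb_of_le (by omega), Zb_of_le h']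
    have e1 : M + 1 + (N + 1) - j = (M + (N+1) - j) + 1 := by omega
    have e2 : M + 1 + N - j = M + (N + 1) - j := by omega
    rw [e1, e2, qBinom_succ_succ]
  · subst h
    rw [Zb_of_le (le_refl _), Zb_of_le (le_refl _), Zb_of_gt (by omega)]
    have e1 : M + 1 + (N + 1) - (N + 1) = M + 1 := by omega
    have e2 : M + (N + 1) - (N + 1) = M := by omega
    rw [e1, e2, qBinom_self, qBinom_self]
    ring
  · rw [Zb_of_gt (by omega), Zb_of_gt (by omega), Zb_of_gt (by omega)]
    ring
/-! ### Counting lemmas for step words -/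

lemma card_filter_lt (L k : ℕ) :
    ((univ : Finset (Fin L)).filter fun i => i.1 < k).card = min k L := by
  rw [← Finset.card_range (min k L)]
  exact Finset.card_bij' (fun (i : Fin L) _ => i.1)
    (fun a ha => (⟨a, by simp only [Finset.mem_range] at ha; omega⟩ : Fin L))
    (fun i hi => by
      simp only [Finset.mem_filter, Finset.mem_univ, true_and] at hi
      simp only [Finset.mem_range]
      omega)
    (fun a ha => by
      simp only [Finset.mem_range] at ha
      simp only [Finset.mem_filter, Finset.mem_univ, true_and]
      omega)
    (fun i _ => rfl) (fun a _ => rfl)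

lemma card_filter_Ico (L a k : ℕ) :
    ((univ : Finset (Fin L)).filter fun i => a ≤ i.1 ∧ i.1 < k).card = min k L - a := by
  rw [← Nat.card_Ico a (min k L)]
  exact Finset.card_bij' (fun (i : Fin L) _ => i.1)
    (fun b hb => (⟨b, by simp only [Finset.mem_Ico] at hb; omega⟩ : Fin L))
    (fun i hi => by
      simp only [Finset.mem_filter, Finset.mem_univ, true_and] at hi
      simp only [Finset.mem_Ico]
      omega)
    (fun b hb => by
      simp only [Finset.mem_Ico] at hb
      simp only [Finset.mem_filter, Finset.mem_univ, true_and]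
      omega)
    (fun i _ => rfl) (fun b _ => rfl)

lemma nBef_add_eBef {L : ℕ} (w : Fin L → Bool) (k : ℕ) :
    nBef w k + eBef w k = min k L := by
  have h : nBef w k + eBef w k = ((univ : Finset (Fin L)).filter fun i => i.1 < k).card := by
    unfold nBef eBef
    rw [Finset.card_filter, Finset.card_filter, Finset.card_filter, ← Finset.sum_add_distrib]
    apply Finset.sum_congr rfl
    intro i _
    by_cases h1 : i.1 < k <;> cases h2 : w i <;> simp [h1, h2]
  rw [h, card_filter_lt]

lemma eBef_le_top {L : ℕ} (w : Fin L → Bool) (k : ℕ) : eBef w k ≤ eBef w L :=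
  Finset.card_le_card (by
    intro i hi
    simp only [Finset.mem_filter, Finset.mem_univ, true_and] at hi ⊢
    exact ⟨i.isLt, hi.2⟩)

/-- The bottom path `E^M N^N`. -/
def greenW (M N : ℕ) : Fin (M + N) → Bool := fun i => decide (M ≤ i.1)

lemma nBef_greenW (M N k : ℕ) : nBef (greenW M N) k = min k (M + N) - M := by
  unfold nBef
  have h : ((univ : Finset (Fin (M+N))).filter fun i => i.1 < k ∧ greenW M N i = true)
      = (univ : Finset (Fin (M+N))).filter fun i => M ≤ i.1 ∧ i.1 < k := by
    apply Finset.filter_congr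
    intro i _
    simp [greenW]
    tauto
  rw [h, card_filter_Ico]

lemma eBef_greenW (M N c : ℕ) : eBef (greenW M N) c = min c M := by
  unfold eBef
  have h : ((univ : Finset (Fin (M+N))).filter fun i => i.1 < c ∧ greenW M N i = false)
      = (univ : Finset (Fin (M+N))).filter fun i => i.1 < min c M := by
    apply Finset.filter_congr
    intro i _
    simp only [greenW, decide_eq_false_iff_not, not_le]
    omega
  rw [h, card_filter_lt]
  omega

lemma greenW_no_peak (M N : ℕ) (i : Fin (M + N)) : ¬ IsGreenPeak (greenW M N) i := by
  rintro ⟨h1, j, hj, h2⟩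
  simp only [greenW, decide_eq_false_iff_not, not_le] at h1
  simp only [greenW, decide_eq_true_eq] at h2
  omega

lemma Xval_greenW (M N c : ℕ) (hc : 1 ≤ c) : Xval (greenW M N) c = M := by
  unfold Xval
  have h : ((univ : Finset (Fin (M+N))).filter
        fun i => greenW M N i = false ∧ nBef (greenW M N) i.1 < c)
      = (univ : Finset (Fin (M+N))).filter fun i => i.1 < M := by
    apply Finset.filter_congr
    intro i _
    have hn := nBef_greenW M N i.1
    simp only [greenW, decide_eq_false_iff_not, not_le]
    constructor
    · tauto
    · intro hi
      refine ⟨hi, ?_⟩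
      omega
  rw [h, card_filter_lt]
  omega

lemma isRPPair_greenW (M N : ℕ) (red : Fin (M + N) → Bool) (hred : nBef red (M + N) = N) :
    IsRPPair M N red (greenW M N) := by
  refine ⟨hred, ?_, ?_⟩
  · rw [nBef_greenW]; omega
  · intro k hk
    rw [nBef_greenW]
    have h1 := nBef_add_eBef red k
    have h2 := nBef_add_eBef red (M + N)
    have h3 := eBef_le_top red k
    omega

/-- In a reduced polyomino with full initial east run, the green path is forced. -/
lemma green_forced {M N : ℕ} {red green : Fin (M + N) → Bool}
    (h : IsRPPair M N red green) (hX : Xval green 1 = M) : green = greenW M N := by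
  have hgN : nBef green (M + N) = N := h.2.1
  have hgE : eBef green (M + N) = M := by
    have := nBef_add_eBef green (M + N)
    omega
  -- every east step of green has no norths before it
  have key : ∀ i : Fin (M + N), green i = false → nBef green i.1 = 0 := by
    have hsub : ((univ : Finset (Fin (M+N))).filter
          fun i => green i = false ∧ nBef green i.1 < 1)
        ⊆ (univ : Finset (Fin (M+N))).filter fun i => i.1 < M + N ∧ green i = false := by
      intro i hi
      simp only [Finset.mem_filter, Finset.mem_univ, true_and] at hi ⊢
      exact ⟨i.isLt, hi.1⟩
    have hcards : ((univ : Finset (Fin (M+N))).filter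
          fun i => i.1 < M + N ∧ green i = false).card ≤
        ((univ : Finset (Fin (M+N))).filter
          fun i => green i = false ∧ nBef green i.1 < 1).card := by
      unfold Xval at hX
      unfold eBef at hgE
      omega
    have heq := Finset.eq_of_subset_of_card_le hsub hcards
    intro i hi
    have : i ∈ (univ : Finset (Fin (M+N))).filter
        fun i => i.1 < M + N ∧ green i = false := by
      simp only [Finset.mem_filter, Finset.mem_univ, true_and]
      exact ⟨i.isLt, hi⟩
    rw [← heq] at this
    simp only [Finset.mem_filter, Finset.mem_univ, true_and] at this
    omega
  have before : ∀ i : Fin (M + N), green i = false →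
      ∀ j : Fin (M + N), j.1 < i.1 → green j = false := by
    intro i hi j hj
    have h0 := key i hi
    unfold nBef at h0
    rw [Finset.card_eq_zero] at h0
    by_contra hgj
    have hgj' : green j = true := by
      cases hjv : green j
      · exact absurd hjv hgj
      · rfl
    have : j ∈ ((univ : Finset (Fin (M+N))).filter
        fun x => x.1 < i.1 ∧ green x = true) := by
      simp only [Finset.mem_filter, Finset.mem_univ, true_and]
      exact ⟨hj, hgj'⟩
    rw [h0] at this
    exact absurd this (Finset.notMem_empty j)
  have ltM : ∀ i : Fin (M + N), green i = false → i.1 < M := by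
    intro i hi
    have hEi : eBef green (i.1 + 1) = i.1 + 1 := by
      unfold eBef
      have h : ((univ : Finset (Fin (M+N))).filter fun j => j.1 < i.1 + 1 ∧ green j = false)
          = (univ : Finset (Fin (M+N))).filter fun j => j.1 < i.1 + 1 := by
        apply Finset.filter_congr
        intro j _
        constructor
        · tauto
        · intro hj
          refine ⟨hj, ?_⟩
          rcases Nat.lt_succ_iff_lt_or_eq.1 hj with h' | h'
          · exact before i hi j h'
          · have : j = i := Fin.ext h'
            rw [this]; exact hi
      rw [h, card_filter_lt]
      have := i.isLt
      omega
    have := eBef_le_top green (i.1 + 1)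
    omega
  funext i
  have hM : M ≤ M + N := Nat.le_add_right M N
  cases hgi : green i
  · have := ltM i hgi
    simp [greenW]
    omega
  · symm
    simp only [greenW, decide_eq_true_eq]
    by_contra hiM
    push_neg at hiM
    -- the set of east steps equals the set of positions < M
    have hsub : ((univ : Finset (Fin (M+N))).filter fun x => x.1 < M + N ∧ green x = false)
        ⊆ (univ : Finset (Fin (M+N))).filter fun x => x.1 < M := by
      intro x hx
      simp only [Finset.mem_filter, Finset.mem_univ, true_and] at hx ⊢
      exact ltM x hx.2
    have hcard2 : ((univ : Finset (Fin (M+N))).filter fun x : Fin (M+N) => x.1 < M).card = M := by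
      rw [card_filter_lt]; omega
    have heq := Finset.eq_of_subset_of_card_le hsub (by
      unfold eBef at hgE
      omega)
    have hmem : i ∈ (univ : Finset (Fin (M+N))).filter fun x : Fin (M+N) => x.1 < M := by
      simp only [Finset.mem_filter, Finset.mem_univ, true_and]
      omega
    rw [← heq] at hmem
    simp only [Finset.mem_filter, Finset.mem_univ, true_and] at hmem
    rw [hgi] at hmem
    simp at hmem
/-! ### Area and bounce computations -/

/-- The area of a single path `w` relative to the full `M`-column grid. -/
def areaW (M : ℕ) {L : ℕ} (w : Fin L → Bool) : ℕ :=
  ∑ i : Fin L, if w i = true then M - eBef w i.1 else 0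

lemma sum_Yval_eq_areaW {L : ℕ} (M : ℕ) (w : Fin L → Bool) :
    ∑ c ∈ Finset.Icc 1 M, Yval w c = areaW M w := by
  unfold Yval areaW
  calc ∑ c ∈ Finset.Icc 1 M, ((univ : Finset (Fin L)).filter
        fun i => w i = true ∧ eBef w i.1 < c).card
      = ∑ c ∈ Finset.Icc 1 M, ∑ i : Fin L, if w i = true ∧ eBef w i.1 < c then 1 else 0 := by
        refine Finset.sum_congr rfl fun c _ => ?_
        rw [Finset.card_filter]
    _ = ∑ i : Fin L, ∑ c ∈ Finset.Icc 1 M, if w i = true ∧ eBef w i.1 < c then 1 else 0 :=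
        Finset.sum_comm
    _ = _ := by
        refine Finset.sum_congr rfl fun i _ => ?_
        by_cases hw : w i = true
        · simp only [hw, true_and, if_true]
          rw [← Finset.card_filter]
          have h : (Finset.Icc 1 M).filter (fun c => eBef w i.1 < c)
              = Finset.Icc (eBef w i.1 + 1) M := by
            ext c
            simp only [Finset.mem_filter, Finset.mem_Icc]
            omega
          rw [h, Nat.card_Icc]
          omega
        · simp [hw]

lemma Yval_greenW (M N c : ℕ) (hc : c ≤ M) : Yval (greenW M N) c = 0 := by
  unfold Yval
  rw [Finset.card_eq_zero, Finset.filter_eq_empty_iff]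
  intro i _
  rintro ⟨h1, h2⟩
  simp only [greenW, decide_eq_true_eq] at h1
  rw [eBef_greenW] at h2
  omega

lemma Yval_top (M N : ℕ) (red : Fin (M + N) → Bool) (h : nBef red (M + N) = N) :
    Yval red (M + 1) = N := by
  have hE : eBef red (M + N) = M := by
    have := nBef_add_eBef red (M + N)
    omega
  unfold Yval
  have h1 : ((univ : Finset (Fin (M+N))).filter fun i => red i = true ∧ eBef red i.1 < M + 1)
      = (univ : Finset (Fin (M+N))).filter fun i => i.1 < M + N ∧ red i = true := by
    apply Finset.filter_congr
    intro i _
    have h3 := eBef_le_top red i.1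
    have h4 := i.isLt
    constructor
    · intro hi
      exact ⟨h4, hi.1⟩
    · intro hi
      refine ⟨hi.2, ?_⟩
      omega
  rw [h1]
  exact h

lemma bncP_eq (M N : ℕ) (red : Fin (M + N) → Bool) (h : nBef red (M + N) = N) (k : ℕ) :
    bncP red (greenW M N) (k + 1) = (M, N) := by
  conv_lhs => rw [bncP]
  rw [Xval_greenW M N _ (Nat.succ_le_succ (Nat.zero_le _)), Yval_top M N red h]

lemma vLabel_zero (M N : ℕ) (red : Fin (M + N) → Bool) (h : nBef red (M + N) = N)
    (y : ℕ) (hy : y < N) : vLabel red (greenW M N) y = 0 := by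
  unfold vLabel
  rw [Finset.card_eq_zero, Finset.filter_eq_empty_iff]
  intro k hk
  simp only [Finset.mem_Icc] at hk
  obtain ⟨k', rfl⟩ : ∃ k', k = k' + 1 := ⟨k - 1, by omega⟩
  rw [bncP_eq M N red h k']
  simp only
  omega

lemma hLabel_zero (M N : ℕ) (red : Fin (M + N) → Bool) (h : nBef red (M + N) = N)
    (c : ℕ) (hc : c < M) : hLabel red (greenW M N) c = 0 := by
  unfold hLabel
  rw [Finset.card_eq_zero, Finset.filter_eq_empty_iff]
  intro k hk
  simp only [Finset.mem_Icc] at hk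
  obtain ⟨k', rfl⟩ : ∃ k', k = k' + 1 := ⟨k - 1, by omega⟩
  rw [bncP_eq M N red h k']
  simp only
  omega

lemma bounce_zero (M N : ℕ) (x : RPoCand M N) (hg : x.2.1 = greenW M N)
    (h : nBef x.1 (M + N) = N) : bounceRPo x = 0 := by
  unfold bounceRPo
  rw [hg]
  rw [Finset.sum_eq_zero, Finset.sum_eq_zero, add_zero]
  · intro c hc
    simp only [Finset.mem_filter, Finset.mem_range] at hc
    exact hLabel_zero M N x.1 h c hc.1
  · intro y hy
    simp only [Finset.mem_filter, Finset.mem_range] at hy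
    exact vLabel_zero M N x.1 h y hy.1

lemma area_eq (M N : ℕ) (x : RPoCand M N) (hg : x.2.1 = greenW M N) :
    areaRPo x = areaW M x.1 := by
  unfold areaRPo
  rw [hg, ← sum_Yval_eq_areaW]
  apply Finset.sum_congr rfl
  intro c hc
  simp only [Finset.mem_Icc] at hc
  rw [Yval_greenW M N c hc.2]
  omega
/-! ### Word statistics and `Fin.cons` lemmas -/

/-- Total number of north steps. -/
def nbT {L : ℕ} (w : Fin L → Bool) : ℕ :=
  ((univ : Finset (Fin L)).filter fun i => w i = true).card

lemma nbT_eq_nBef {L : ℕ} (w : Fin L → Bool) : nbT w = nBef w L := by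
  unfold nbT nBef
  congr 1
  apply Finset.filter_congr
  intro i _
  have := i.isLt
  tauto

/-- A strict valley: a north step immediately preceded by an east step. -/
def IsSV {L : ℕ} (w : Fin L → Bool) (i : Fin L) : Prop :=
  w i = true ∧ ∃ j : Fin L, i.1 = j.1 + 1 ∧ w j = false

def vcnt {L : ℕ} (w : Fin L → Bool) : ℕ :=
  ((univ : Finset (Fin L)).filter (IsRedValley w)).card

def scnt {L : ℕ} (w : Fin L → Bool) : ℕ :=
  ((univ : Finset (Fin L)).filter (IsSV w)).card

lemma eBef_zero {L : ℕ} (w : Fin L → Bool) : eBef w 0 = 0 := by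
  unfold eBef
  rw [Finset.card_eq_zero, Finset.filter_eq_empty_iff]
  intro i _
  rintro ⟨h, _⟩
  omega

lemma eBef_cons_succ {L : ℕ} (b : Bool) (w : Fin L → Bool) (k : ℕ) :
    eBef (Fin.cons b w) (k + 1) = (if b = false then 1 else 0) + eBef w k := by
  unfold eBef
  rw [Finset.card_filter, Finset.card_filter, Fin.sum_univ_succ]
  have h0 : (if (0 : Fin (L+1)).1 < k + 1 ∧ (Fin.cons b w : Fin (L+1) → Bool) 0 = false
      then 1 else 0) = if b = false then 1 else 0 := by
    simp [Fin.cons_zero]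
  rw [h0]
  congr 1
  apply Finset.sum_congr rfl
  intro i _
  simp only [Fin.cons_succ, Fin.val_succ, Nat.add_lt_add_iff_right]

lemma nbT_cons {L : ℕ} (b : Bool) (w : Fin L → Bool) :
    nbT (Fin.cons b w) = (if b = true then 1 else 0) + nbT w := by
  unfold nbT
  rw [Finset.card_filter, Finset.card_filter, Fin.sum_univ_succ]
  simp only [Fin.cons_zero, Fin.cons_succ]

lemma areaW_cons_true (M : ℕ) {L : ℕ} (w : Fin L → Bool) :
    areaW M (Fin.cons true w) = M + areaW M w := by
  unfold areaW
  rw [Fin.sum_univ_succ]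
  have h0 : (if (Fin.cons true w : Fin (L+1) → Bool) 0 = true
      then M - eBef (Fin.cons true w) (0 : Fin (L+1)).1 else 0) = M := by
    simp [Fin.cons_zero, eBef_zero]
  rw [h0]
  congr 1
  apply Finset.sum_congr rfl
  intro i _
  simp only [Fin.cons_succ, Fin.val_succ, eBef_cons_succ]
  simp

lemma areaW_cons_false (M : ℕ) {L : ℕ} (w : Fin L → Bool) :
    areaW M (Fin.cons false w) = areaW (M - 1) w := by
  unfold areaW
  rw [Fin.sum_univ_succ]
  have h0 : (if (Fin.cons false w : Fin (L+1) → Bool) 0 = true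
      then M - eBef (Fin.cons false w) (0 : Fin (L+1)).1 else 0) = 0 := by
    simp [Fin.cons_zero]
  rw [h0, zero_add]
  apply Finset.sum_congr rfl
  intro i _
  simp only [Fin.cons_succ, Fin.val_succ, eBef_cons_succ, if_pos rfl]
  cases hw : w i
  · simp
  · simp only [if_true]
    omega

lemma isRedValley_cons_zero {L : ℕ} (b : Bool) (w : Fin L → Bool) :
    IsRedValley (Fin.cons b w) 0 ↔ b = true := by
  unfold IsRedValley
  simp [Fin.cons_zero]

lemma isSV_cons_zero {L : ℕ} (b : Bool) (w : Fin L → Bool) :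
    ¬ IsSV (Fin.cons b w) 0 := by
  rintro ⟨h1, j, hj, h2⟩
  simp only [Fin.val_zero] at hj
  omega

lemma isSV_cons_succ {L : ℕ} (b : Bool) (w : Fin L → Bool) (i : Fin L) :
    IsSV (Fin.cons b w) i.succ ↔ (w i = true ∧ ((i.1 = 0 ∧ b = false) ∨ IsSV w i)) := by
  unfold IsSV
  rw [Fin.cons_succ]
  constructor
  · rintro ⟨h1, j, hj, h2⟩
    refine ⟨h1, ?_⟩
    rw [Fin.val_succ] at hj
    rcases Nat.eq_zero_or_pos i.1 with h0 | hpos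
    · left
      refine ⟨h0, ?_⟩
      have hj0 : j = 0 := by
        apply Fin.ext
        rw [Fin.val_zero]
        omega
      rw [hj0, Fin.cons_zero] at h2
      exact h2
    · right
      refine ⟨h1, ?_⟩
      obtain ⟨t, ht⟩ : ∃ t, i.1 = t + 1 := ⟨i.1 - 1, by omega⟩
      have htL : t < L := by have := i.isLt; omega
      refine ⟨⟨t, htL⟩, ht, ?_⟩
      have hjt : j = Fin.succ ⟨t, htL⟩ := Fin.ext (by simp [Fin.val_succ]; omega)
      rw [hjt, Fin.cons_succ] at h2
      exact h2
  · rintro ⟨h1, h2 | h2⟩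
    · refine ⟨h1, 0, ?_, ?_⟩
      · simp only [Fin.val_succ, Fin.val_zero]
        omega
      · rw [Fin.cons_zero]
        exact h2.2
    · obtain ⟨_, j, hj, hw⟩ := h2
      refine ⟨h1, j.succ, ?_, ?_⟩
      · rw [Fin.val_succ, Fin.val_succ]
        omega
      · rw [Fin.cons_succ]
        exact hw

lemma isRedValley_cons_succ {L : ℕ} (b : Bool) (w : Fin L → Bool) (i : Fin L) :
    IsRedValley (Fin.cons b w) i.succ ↔ (w i = true ∧ ((i.1 = 0 ∧ b = false) ∨ IsSV w i)) := by
  rw [← isSV_cons_succ]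
  unfold IsRedValley IsSV
  have hne : (i.succ : Fin (L+1)).1 ≠ 0 := by
    rw [Fin.val_succ]
    omega
  tauto

lemma vcnt_cons_true {L : ℕ} (w : Fin L → Bool) :
    vcnt (Fin.cons true w) = 1 + scnt w := by
  unfold vcnt scnt
  rw [Finset.card_filter, Finset.card_filter, Fin.sum_univ_succ]
  congr 1
  · rw [if_pos ((isRedValley_cons_zero true w).2 rfl)]
  · apply Finset.sum_congr rfl
    intro i _
    apply if_congr _ rfl rfl
    rw [isRedValley_cons_succ]
    unfold IsSV
    constructor
    · rintro ⟨h1, ⟨_, hb⟩ | h2⟩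
      · exact absurd hb (by simp)
      · exact h2
    · intro h
      exact ⟨h.1, Or.inr h⟩

lemma vcnt_cons_false {L : ℕ} (w : Fin L → Bool) :
    vcnt (Fin.cons false w) = vcnt w := by
  unfold vcnt
  rw [Finset.card_filter, Finset.card_filter, Fin.sum_univ_succ]
  have h0 : (if IsRedValley (Fin.cons false w) 0 then 1 else 0) = 0 := by
    rw [if_neg]
    rw [isRedValley_cons_zero]
    simp
  rw [h0, zero_add]
  apply Finset.sum_congr rfl
  intro i _
  apply if_congr _ rfl rfl
  rw [isRedValley_cons_succ]
  unfold IsRedValley IsSV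
  tauto

lemma scnt_cons_true {L : ℕ} (w : Fin L → Bool) :
    scnt (Fin.cons true w) = scnt w := by
  unfold scnt
  rw [Finset.card_filter, Finset.card_filter, Fin.sum_univ_succ]
  have h0 : (if IsSV (Fin.cons true w) 0 then 1 else 0) = 0 := by
    rw [if_neg (isSV_cons_zero true w)]
  rw [h0, zero_add]
  apply Finset.sum_congr rfl
  intro i _
  apply if_congr _ rfl rfl
  rw [isSV_cons_succ]
  unfold IsSV
  constructor
  · rintro ⟨h1, ⟨_, hb⟩ | h2⟩
    · exact absurd hb (by simp)
    · exact h2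
  · intro h
    exact ⟨h.1, Or.inr h⟩

lemma scnt_cons_false {L : ℕ} (w : Fin L → Bool) :
    scnt (Fin.cons false w) = vcnt w := by
  unfold scnt vcnt
  rw [Finset.card_filter, Finset.card_filter, Fin.sum_univ_succ]
  have h0 : (if IsSV (Fin.cons false w) 0 then 1 else 0) = 0 := by
    rw [if_neg (isSV_cons_zero false w)]
  rw [h0, zero_add]
  apply Finset.sum_congr rfl
  intro i _
  apply if_congr _ rfl rfl
  rw [isSV_cons_succ]
  unfold IsRedValley IsSV
  tauto

lemma sum_cons_split {L : ℕ} (F : (Fin (L+1) → Bool) → R2) :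
    ∑ w : Fin (L+1) → Bool, F w
      = (∑ w : Fin L → Bool, F (Fin.cons false w))
        + ∑ w : Fin L → Bool, F (Fin.cons true w) := by
  rw [← Equiv.sum_comp (Fin.consEquiv fun _ => Bool) F, Fintype.sum_prod_type,
    Fintype.sum_bool]
  rw [add_comm]
  rfl
/-! ### The marked-path enumerators and their closed forms -/

def S1 (L N M j : ℕ) : R2 :=
  ∑ w ∈ (univ : Finset (Fin L → Bool)).filter (fun w => nbT w = N),
    ((vcnt w).choose j : R2) * qv ^ areaW M w

def S2 (L N M j : ℕ) : R2 :=
  ∑ w ∈ (univ : Finset (Fin L → Bool)).filter (fun w => nbT w = N),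
    ((scnt w).choose j : R2) * qv ^ areaW M w

def Tf (M N j : ℕ) : R2 := qv ^ j.choose 2 * qBinom (M+1) j * Zb M N j

def Wf (M N j : ℕ) : R2 := qv ^ j.choose 2 * qBinom M j * Zb M N j

/-! #### Constant words -/

lemma nbT_eq_zero {L : ℕ} (w : Fin L → Bool) : nbT w = 0 ↔ w = fun _ => false := by
  unfold nbT
  rw [Finset.card_eq_zero, Finset.filter_eq_empty_iff]
  constructor
  · intro h
    funext i
    have := h (Finset.mem_univ i)
    cases hw : w i
    · rfl
    · exact absurd hw this
  · intro h i _
    rw [h]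
    simp

lemma nbT_eq_top {L : ℕ} (w : Fin L → Bool) : nbT w = L ↔ w = fun _ => true := by
  constructor
  · intro h
    have hsub : (univ : Finset (Fin L)).filter (fun i => w i = true) ⊆ univ :=
      Finset.filter_subset _ _
    have hcard : (univ : Finset (Fin L)).card
        ≤ ((univ : Finset (Fin L)).filter (fun i => w i = true)).card := by
      rw [Finset.card_univ, Fintype.card_fin]
      unfold nbT at h
      omega
    have heq := Finset.eq_of_subset_of_card_le hsub hcard
    funext i
    have hm : i ∈ (univ : Finset (Fin L)).filter (fun i => w i = true) := by
      rw [heq]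
      exact Finset.mem_univ i
    simpa using hm
  · intro h
    unfold nbT
    rw [h]
    rw [Finset.filter_true_of_mem (fun _ _ => rfl), Finset.card_univ, Fintype.card_fin]

lemma vcnt_const_false (L : ℕ) : vcnt (fun _ : Fin L => false) = 0 := by
  unfold vcnt
  rw [Finset.card_eq_zero, Finset.filter_eq_empty_iff]
  rintro i - ⟨h, -⟩
  simp at h

lemma scnt_const_false (L : ℕ) : scnt (fun _ : Fin L => false) = 0 := by
  unfold scnt
  rw [Finset.card_eq_zero, Finset.filter_eq_empty_iff]
  rintro i - ⟨h, -⟩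
  simp at h

lemma areaW_const_false (M L : ℕ) : areaW M (fun _ : Fin L => false) = 0 := by
  unfold areaW
  apply Finset.sum_eq_zero
  intro i _
  simp

lemma scnt_const_true (L : ℕ) : scnt (fun _ : Fin L => true) = 0 := by
  unfold scnt
  rw [Finset.card_eq_zero, Finset.filter_eq_empty_iff]
  rintro i - ⟨-, j, -, h2⟩
  simp at h2

lemma vcnt_const_true_succ (L : ℕ) : vcnt (fun _ : Fin (L+1) => true) = 1 := by
  unfold vcnt
  have hf : ((univ : Finset (Fin (L+1))).filter
      (IsRedValley (fun _ : Fin (L+1) => true))) = {0} := by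
    ext i
    simp only [Finset.mem_filter, Finset.mem_univ, true_and, Finset.mem_singleton]
    unfold IsRedValley
    constructor
    · rintro ⟨-, h0 | ⟨j, hj, h2⟩⟩
      · apply Fin.ext
        rw [Fin.val_zero]
        exact h0
      · simp at h2
    · rintro rfl
      exact ⟨rfl, Or.inl (Fin.val_zero _)⟩
  rw [hf, Finset.card_singleton]

lemma areaW_zeroM {L : ℕ} (w : Fin L → Bool) : areaW 0 w = 0 := by
  unfold areaW
  apply Finset.sum_eq_zero
  intro i _
  cases hw : w i <;> simp [hw]

/-! #### Base cases -/

lemma S1_base_N0 (L M j : ℕ) : S1 L 0 M j = if j = 0 then 1 else 0 := by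
  unfold S1
  have hf : (univ : Finset (Fin L → Bool)).filter (fun w => nbT w = 0)
      = {fun _ => false} := by
    ext w
    simp only [Finset.mem_filter, Finset.mem_univ, true_and, Finset.mem_singleton]
    exact nbT_eq_zero w
  rw [hf, Finset.sum_singleton, vcnt_const_false, areaW_const_false]
  cases j with
  | zero => simp
  | succ j' => simp [Nat.choose_zero_succ]

lemma S2_base_N0 (L M j : ℕ) : S2 L 0 M j = if j = 0 then 1 else 0 := by
  unfold S2
  have hf : (univ : Finset (Fin L → Bool)).filter (fun w => nbT w = 0)
      = {fun _ => false} := by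
    ext w
    simp only [Finset.mem_filter, Finset.mem_univ, true_and, Finset.mem_singleton]
    exact nbT_eq_zero w
  rw [hf, Finset.sum_singleton, scnt_const_false, areaW_const_false]
  cases j with
  | zero => simp
  | succ j' => simp [Nat.choose_zero_succ]

lemma Tf_N0 (M j : ℕ) : Tf M 0 j = if j = 0 then 1 else 0 := by
  cases j with
  | zero =>
    unfold Tf
    have hZ : Zb M 0 0 = qBinom M M := by
      rw [Zb_of_le (le_refl 0)]
      norm_num
    rw [hZ, qBinom_self, qBinom_zero_right]
    norm_num
  | succ j' =>
    unfold Tf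
    rw [Zb_of_gt (Nat.succ_pos j'), mul_zero]
    simp

lemma Wf_N0 (M j : ℕ) : Wf M 0 j = if j = 0 then 1 else 0 := by
  cases j with
  | zero =>
    unfold Wf
    have hZ : Zb M 0 0 = qBinom M M := by
      rw [Zb_of_le (le_refl 0)]
      norm_num
    rw [hZ, qBinom_self, qBinom_zero_right]
    norm_num
  | succ j' =>
    unfold Wf
    rw [Zb_of_gt (Nat.succ_pos j'), mul_zero]
    simp

lemma S1_base_M0 (L j : ℕ) : S1 (L+1) (L+1) 0 j = ((1 : ℕ).choose j : R2) := by
  unfold S1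
  have hf : (univ : Finset (Fin (L+1) → Bool)).filter (fun w => nbT w = L+1)
      = {fun _ => true} := by
    ext w
    simp only [Finset.mem_filter, Finset.mem_univ, true_and, Finset.mem_singleton]
    exact nbT_eq_top w
  rw [hf, Finset.sum_singleton, vcnt_const_true_succ, areaW_zeroM]
  simp

lemma S2_base_M0 (L j : ℕ) : S2 (L+1) (L+1) 0 j = ((0 : ℕ).choose j : R2) := by
  unfold S2
  have hf : (univ : Finset (Fin (L+1) → Bool)).filter (fun w => nbT w = L+1)
      = {fun _ => true} := by
    ext w
    simp only [Finset.mem_filter, Finset.mem_univ, true_and, Finset.mem_singleton]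
    exact nbT_eq_top w
  rw [hf, Finset.sum_singleton, scnt_const_true, areaW_zeroM]
  simp

lemma Tf_M0 (N j : ℕ) (hN : 1 ≤ N) : Tf 0 N j = ((1 : ℕ).choose j : R2) := by
  match j with
  | 0 =>
    unfold Tf
    have hZ : Zb 0 N 0 = 1 := by
      rw [Zb_of_le (Nat.zero_le N), qBinom_zero_right]
    rw [hZ, qBinom_zero_right]
    norm_num
  | 1 =>
    unfold Tf
    have hZ : Zb 0 N 1 = 1 := by
      rw [Zb_of_le hN, qBinom_zero_right]
    rw [hZ, qBinom_self]
    norm_num [Nat.choose]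
  | (j'+2) =>
    unfold Tf
    rw [show qBinom (0+1) (j'+2) = 0 from qBinom_eq_zero_of_lt (by omega),
      show Nat.choose 1 (j'+2) = 0 from Nat.choose_eq_zero_of_lt (by omega)]
    simp

lemma Wf_M0 (N j : ℕ) : Wf 0 N j = ((0 : ℕ).choose j : R2) := by
  match j with
  | 0 =>
    unfold Wf
    have hZ : Zb 0 N 0 = 1 := by
      rw [Zb_of_le (Nat.zero_le N), qBinom_zero_right]
    rw [hZ, qBinom_zero_right]
    norm_num
  | (j'+1) =>
    unfold Wf
    rw [show qBinom 0 (j'+1) = 0 from qBinom_eq_zero_of_lt (by omega),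
      Nat.choose_zero_succ]
    simp
/-! #### Recursions coming from removing the first step -/

lemma S1_split (L N M j : ℕ) :
    S1 (L+1) N M j
      = S1 L N (M-1) j
        + ∑ w : Fin L → Bool, (if 1 + nbT w = N
            then (((1 + scnt w).choose j : ℕ) : R2) * qv ^ (M + areaW M w) else 0) := by
  unfold S1
  rw [Finset.sum_filter, Finset.sum_filter, sum_cons_split]
  congr 1
  · apply Finset.sum_congr rfl
    intro w _
    rw [nbT_cons, vcnt_cons_false, areaW_cons_false]
    norm_num
  · apply Finset.sum_congr rfl
    intro w _
    rw [nbT_cons, vcnt_cons_true, areaW_cons_true]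
    norm_num

lemma S2_split (L N M j : ℕ) :
    S2 (L+1) N M j
      = S1 L N (M-1) j
        + ∑ w : Fin L → Bool, (if 1 + nbT w = N
            then (((scnt w).choose j : ℕ) : R2) * qv ^ (M + areaW M w) else 0) := by
  unfold S2 S1
  rw [Finset.sum_filter, Finset.sum_filter, sum_cons_split]
  congr 1
  · apply Finset.sum_congr rfl
    intro w _
    rw [nbT_cons, scnt_cons_false, areaW_cons_false]
    norm_num
  · apply Finset.sum_congr rfl
    intro w _
    rw [nbT_cons, scnt_cons_true, areaW_cons_true]
    norm_num

lemma S1_rec_zero (L N' M : ℕ) :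
    S1 (L+1) (N'+1) M 0 = S1 L (N'+1) (M-1) 0 + qv ^ M * S2 L N' M 0 := by
  rw [S1_split]
  congr 1
  unfold S2
  rw [Finset.sum_filter, Finset.mul_sum]
  apply Finset.sum_congr rfl
  intro w _
  by_cases h : nbT w = N'
  · rw [if_pos (by omega), if_pos h, Nat.choose_zero_right, Nat.choose_zero_right, pow_add]
    push_cast
    ring
  · rw [if_neg (by omega), if_neg h, mul_zero]

lemma S1_rec_succ (L N' M j : ℕ) :
    S1 (L+1) (N'+1) M (j+1)
      = S1 L (N'+1) (M-1) (j+1) + qv ^ M * (S2 L N' M (j+1) + S2 L N' M j) := by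
  rw [S1_split]
  congr 1
  unfold S2
  rw [Finset.sum_filter, Finset.sum_filter, ← Finset.sum_add_distrib, Finset.mul_sum]
  apply Finset.sum_congr rfl
  intro w _
  by_cases h : nbT w = N'
  · rw [if_pos (by omega), if_pos h, if_pos h]
    have hc : (1 + scnt w).choose (j+1) = (scnt w).choose j + (scnt w).choose (j+1) := by
      rw [add_comm 1 (scnt w), Nat.choose_succ_succ]
    rw [hc, pow_add]
    push_cast
    ring
  · rw [if_neg (by omega), if_neg h, if_neg h]
    simp

lemma S2_rec (L N' M j : ℕ) :
    S2 (L+1) (N'+1) M j = S1 L (N'+1) (M-1) j + qv ^ M * S2 L N' M j := by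
  rw [S2_split]
  congr 1
  unfold S2
  rw [Finset.sum_filter, Finset.mul_sum]
  apply Finset.sum_congr rfl
  intro w _
  by_cases h : nbT w = N'
  · rw [if_pos (by omega), if_pos h, pow_add]
    push_cast
    ring
  · rw [if_neg (by omega), if_neg h, mul_zero]

/-! #### Recursions for the closed forms -/

lemma Zb_succ_succ (M N j : ℕ) : Zb M (N+1) (j+1) = Zb M N j := by
  unfold Zb
  congr 1
  push_cast
  ring

lemma Wf_rec (M N j : ℕ) :
    Wf (M+1) (N+1) j = Tf M (N+1) j + qv ^ (M+1) * Wf (M+1) N j := by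
  unfold Wf Tf
  rw [Zb_pascal]
  ring

lemma Tf_rec_zero (M N : ℕ) :
    Tf (M+1) (N+1) 0 = Tf M (N+1) 0 + qv ^ (M+1) * Wf (M+1) N 0 := by
  unfold Tf Wf
  rw [Zb_pascal]
  simp only [qBinom_zero_right]
  ring

lemma Tf_rec_succ (M N j : ℕ) :
    Tf (M+1) (N+1) (j+1)
      = Tf M (N+1) (j+1) + qv ^ (M+1) * (Wf (M+1) N (j+1) + Wf (M+1) N j) := by
  unfold Tf Wf
  have hZ : Zb (M+1) N j = Zb (M+1) (N+1) (j+1) := (Zb_succ_succ (M+1) N j).symm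
  rw [hZ, Zb_pascal]
  have hE := qBinom_E (M+1) j
  linear_combination (Zb M (N+1) (j+1) + qv ^ (M+1) * Zb (M+1) N (j+1)) * hE

/-! #### The main induction -/

lemma mainS : ∀ L M N j : ℕ, M + N = L →
    S1 L N M j = Tf M N j ∧ S2 L N M j = Wf M N j := by
  intro L
  induction L with
  | zero =>
    intro M N j h
    obtain ⟨rfl, rfl⟩ : M = 0 ∧ N = 0 := by omega
    exact ⟨by rw [S1_base_N0, Tf_N0], by rw [S2_base_N0, Wf_N0]⟩
  | succ L ih =>
    intro M N j h
    rcases N with _ | N'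
    · exact ⟨by rw [S1_base_N0, Tf_N0], by rw [S2_base_N0, Wf_N0]⟩
    rcases M with _ | M'
    · have hL : N' = L := by omega
      subst hL
      constructor
      · rw [S1_base_M0, Tf_M0 _ _ (by omega)]
      · rw [S2_base_M0, Wf_M0]
    · have h1 : M' + (N'+1) = L := by omega
      have h2 : (M'+1) + N' = L := by omega
      constructor
      · cases j with
        | zero =>
          have e := S1_rec_zero L N' (M'+1)
          simp only [Nat.add_sub_cancel] at e
          rw [e, (ih M' (N'+1) 0 h1).1, (ih (M'+1) N' 0 h2).2, Tf_rec_zero]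
        | succ j' =>
          have e := S1_rec_succ L N' (M'+1) j'
          simp only [Nat.add_sub_cancel] at e
          rw [e, (ih M' (N'+1) (j'+1) h1).1, (ih (M'+1) N' (j'+1) h2).2,
            (ih (M'+1) N' j' h2).2, Tf_rec_succ]
      · have e := S2_rec L N' (M'+1) j
        simp only [Nat.add_sub_cancel] at e
        rw [e, (ih M' (N'+1) j h1).1, (ih (M'+1) N' j h2).2, Wf_rec]
/-! ### Reduction of the polyomino enumerator to the path sum -/

lemma RPo_empty (M N K J : ℕ) (hK : K ≠ 0) :
    (univ : Finset (RPoCand M N)).filter (IsRPo M N (M+1) K J) = ∅ := by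
  rw [Finset.filter_eq_empty_iff]
  rintro x - hx
  obtain ⟨hpair, hpk, hpkc, -, -, hX⟩ := hx
  have hg : x.2.1 = greenW M N := green_forced hpair (by omega)
  have hne : x.2.2.1.Nonempty := by
    rw [← Finset.card_pos, hpkc]
    omega
  obtain ⟨i, hi⟩ := hne
  have hpeak := hpk i hi
  rw [hg] at hpeak
  exact greenW_no_peak M N i hpeak

lemma fiber_card (M N J : ℕ) (red : Fin (M+N) → Bool) (hred : nBef red (M+N) = N) :
    (((univ : Finset (RPoCand M N)).filter (IsRPo M N (M+1) 0 J)).filter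
        (fun x => x.1 = red)).card = (vcnt red).choose J := by
  have hXv : Xval (greenW M N) 1 = M := Xval_greenW M N 1 (le_refl 1)
  rw [show (vcnt red).choose J
      = (Finset.powersetCard J ((univ : Finset (Fin (M+N))).filter (IsRedValley red))).card
      from (Finset.card_powersetCard J _).symm]
  apply Finset.card_bij' (fun x _ => x.2.2.2)
    (fun V _ => ((red, greenW M N, ∅, V) : RPoCand M N))
  · rintro x hx
    simp only [Finset.mem_filter, Finset.mem_univ, true_and] at hx
    obtain ⟨⟨hpair, hpk, hpkc, hvl, hvlc, hX⟩, hfst⟩ := hx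
    rw [Finset.mem_powersetCard]
    constructor
    · intro i hi
      simp only [Finset.mem_filter, Finset.mem_univ, true_and]
      have := hvl i hi
      rwa [hfst] at this
    · exact hvlc
  · intro V hV
    rw [Finset.mem_powersetCard] at hV
    simp only [Finset.mem_filter, Finset.mem_univ, true_and]
    refine ⟨⟨isRPPair_greenW M N red hred, ?_, ?_, ?_, hV.2, by rw [hXv]⟩, trivial⟩
    · intro i hi
      exact absurd hi (Finset.notMem_empty i)
    · exact Finset.card_empty
    · intro i hi
      have := hV.1 hi
      simp only [Finset.mem_filter, Finset.mem_univ, true_and] at this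
      exact this
  · rintro ⟨r, g, P, V⟩ hx
    simp only [Finset.mem_filter, Finset.mem_univ, true_and] at hx
    obtain ⟨⟨hpair, hpk, hpkc, hvl, hvlc, hX⟩, hfst⟩ := hx
    simp only at hfst hpair hpk hpkc hX ⊢
    have hg : g = greenW M N := green_forced hpair (by omega)
    have hP : P = ∅ := Finset.card_eq_zero.1 hpkc
    rw [hfst, hg, hP]
  · intro V _
    rfl

lemma RPo_sum (M N J : ℕ) :
    ∑ x ∈ (univ : Finset (RPoCand M N)).filter (IsRPo M N (M+1) 0 J),
      qv ^ areaRPo x * tv ^ bounceRPo x = S1 (M+N) N M J := by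
  have hstep : ∀ x ∈ (univ : Finset (RPoCand M N)).filter (IsRPo M N (M+1) 0 J),
      qv ^ areaRPo x * tv ^ bounceRPo x = qv ^ areaW M x.1 := by
    intro x hx
    simp only [Finset.mem_filter, Finset.mem_univ, true_and] at hx
    obtain ⟨hpair, hpk, hpkc, hvl, hvlc, hX⟩ := hx
    have hg : x.2.1 = greenW M N := green_forced hpair (by omega)
    rw [bounce_zero M N x hg hpair.1, area_eq M N x hg, pow_zero, mul_one]
  rw [Finset.sum_congr rfl hstep]
  have hcomp := Finset.sum_comp (s := (univ : Finset (RPoCand M N)).filter (IsRPo M N (M+1) 0 J))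
    (fun red => qv ^ areaW M red) (fun x => x.1)
  rw [hcomp]
  have himg : ((univ : Finset (RPoCand M N)).filter (IsRPo M N (M+1) 0 J)).image (fun x => x.1)
      ⊆ (univ : Finset (Fin (M+N) → Bool)).filter (fun w => nbT w = N) := by
    intro red hred
    rw [Finset.mem_image] at hred
    obtain ⟨x, hx, rfl⟩ := hred
    simp only [Finset.mem_filter, Finset.mem_univ, true_and] at hx ⊢
    rw [nbT_eq_nBef]
    exact hx.1.1
  have him_cong : ∀ red ∈ ((univ : Finset (RPoCand M N)).filter
        (IsRPo M N (M+1) 0 J)).image (fun x => x.1),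
      ((((univ : Finset (RPoCand M N)).filter (IsRPo M N (M+1) 0 J)).filter
        (fun x => x.1 = red)).card) • qv ^ areaW M red
        = ((vcnt red).choose J) • qv ^ areaW M red := by
    intro red hred
    have h1 := himg hred
    simp only [Finset.mem_filter, Finset.mem_univ, true_and] at h1
    rw [fiber_card M N J red (by rw [← nbT_eq_nBef]; exact h1)]
  rw [Finset.sum_congr rfl him_cong]
  rw [Finset.sum_subset himg]
  · unfold S1
    apply Finset.sum_congr rfl
    intro w _
    rw [nsmul_eq_mul]
  · intro red hred hnotim
    simp only [Finset.mem_filter, Finset.mem_univ, true_and] at hred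
    have hz : (vcnt red).choose J = 0 := by
      by_contra hne
      have hle : J ≤ vcnt red := by
        rcases Nat.lt_or_ge (vcnt red) J with h | h
        · exact absurd (Nat.choose_eq_zero_of_lt h) hne
        · exact h
      obtain ⟨V, hVsub, hVcard⟩ := Finset.exists_subset_card_eq
        (s := (univ : Finset (Fin (M+N))).filter (IsRedValley red)) (n := J) (by
          unfold vcnt at hle
          exact hle)
      apply hnotim
      rw [Finset.mem_image]
      refine ⟨((red, greenW M N, ∅, V) : RPoCand M N), ?_, rfl⟩
      simp only [Finset.mem_filter, Finset.mem_univ, true_and]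
      refine ⟨isRPPair_greenW M N red (by rw [← nbT_eq_nBef]; exact hred), ?_, ?_, ?_, hVcard, ?_⟩
      · intro i hi
        exact absurd hi (Finset.notMem_empty i)
      · exact Finset.card_empty
      · intro i hi
        have := hVsub hi
        simp only [Finset.mem_filter, Finset.mem_univ, true_and] at this
        exact this
      · rw [Xval_greenW M N 1 (le_refl 1)]
    rw [hz, zero_smul]

/-- The `q`-exponent in the statement matches `Nat.choose 2`. -/
lemma exp_choose_two (J : ℕ) : ((J : ℤ) * ((J : ℤ) - 1) / 2).toNat = J.choose 2 := by
  rcases J with _ | J'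
  · simp
  · have h1 : ((J' + 1 : ℕ) : ℤ) * (((J' + 1 : ℕ) : ℤ) - 1) = (((J' + 1) * J' : ℕ) : ℤ) := by
      push_cast
      ring
    rw [h1, show (2:ℤ) = ((2:ℕ):ℤ) from rfl, ← Int.natCast_ediv]
    rw [Int.toNat_natCast]
    rw [Nat.choose_two_right]
    simp

/-- For `m, n, k, j ≥ 0`, the `(area, bounce)` q,t-enumerator
of doubly decorated reduced polyominoes satisfies
`RP_{q,t}(m∖(m+1), n)^{∘k,j}
  = δ_{k,0} ⬝ q^(binom j 2) ⬝ [m+1 choose j]_q ⬝ [m+n-j choose m]_q`. -/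
theorem RPo_base (m n k j : ℤ) (hm : 0 ≤ m) (hn : 0 ≤ n) (hk : 0 ≤ k) (hj : 0 ≤ j) :
    RPoE m n (m + 1) k j =
      (if k = 0 then 1 else 0) * qv ^ (j * (j - 1) / 2).toNat *
        qBinomZ (m + 1) j * qBinomZ (m + n - j) m := by
  lift m to ℕ using hm with M
  lift n to ℕ using hn with N
  lift k to ℕ using hk with K
  lift j to ℕ using hj with J
  unfold RPoE
  rw [if_pos (by omega)]
  have e1 : ((M : ℤ) + 1).toNat = M + 1 := by omega
  have e2 : ((M : ℤ)).toNat = M := by omega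
  have e3 : ((N : ℤ)).toNat = N := by omega
  have e4 : ((K : ℤ)).toNat = K := by omega
  have e5 : ((J : ℤ)).toNat = J := by omega
  rw [e1, e2, e3, e4, e5, exp_choose_two]
  have eb1 : qBinomZ ((M : ℤ) + 1) (J : ℤ) = qBinom (M + 1) J := by
    rw [show ((M : ℤ) + 1) = (((M + 1 : ℕ) : ℤ)) by push_cast; ring, qBinomZ_of_le]
  have eb2 : qBinomZ ((M : ℤ) + (N : ℤ) - (J : ℤ)) (M : ℤ) = Zb M N J := rfl
  rw [eb1, eb2]
  by_cases hK : K = 0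
  · subst hK
    rw [RPo_sum M N J, (mainS (M + N) M N J rfl).1]
    unfold Tf
    rw [if_pos (by norm_num), one_mul]
  · rw [RPo_empty M N K J hK, Finset.sum_empty]
    rw [if_neg (by simpa using hK)]
    ring
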